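/- Let G=(V,D,B) be a mixed graph. (1) There exists a family (Y_v : v∈V) of subsets of V such that each Y_v satisfies the weak half-trek criterion with respect to v and a total ordering ≺ on V with w≺v whenever w∈Y_v∩htr(v), if and only if G is HTC-identifiable. (2) Every family (Y_v : v∈V) of subsets of V either contains a set Y_v failing the weak half-trek criterion with respect to v or contains a pair (Y_v,Y_w) with v∈Y_w and w∈Y_v, if and only if G is HTC-infinite-to-one. -/

import Mathlib

open scoped Classical Matrix

/-- A mixed graph `G = (V, D, B)`: a finite vertex set `V`, a set `D` of directed
edges, and a symmetric set `B` of bidirected edges; no self-loops. -/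
structure MixedGraph (V : Type*) [Fintype V] [DecidableEq V] where
  D : Finset (V × V)
  B : Finset (V × V)
  B_symm : ∀ v w : V, (v, w) ∈ B → (w, v) ∈ B
  D_irrefl : ∀ v : V, (v, v) ∉ D
  B_irrefl : ∀ v : V, (v, v) ∉ B

namespace MixedGraph

variable {V : Type*} [Fintype V] [DecidableEq V]

/-- The parents of `v`: nodes `w` with `w → v ∈ D`. -/
def pa (G : MixedGraph V) (v : V) : Finset V :=
  Finset.univ.filter fun w => (w, v) ∈ G.D

/-- The siblings of `v`: nodes `w` with `w ↔ v ∈ B`. -/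
def sib (G : MixedGraph V) (v : V) : Finset V :=
  Finset.univ.filter fun w => (w, v) ∈ G.B

/-- A trek: a walk with no colliding arrowheads.  The field `left` lists the nodes of the
left-hand side from top (head) to source (last); `right` lists the nodes of the right-hand
side from top (head) to target (last); consecutive nodes in each list are joined by directed
edges pointing away from the head.  If `hasBidir` then the two heads are joined by a
bidirected edge, otherwise they coincide (the top node). -/
structure Trek (G : MixedGraph V) where
  left : List V
  right : List V
  left_ne : left ≠ []
  right_ne : right ≠ []
  hasBidir : Bool
  left_chain : left.Chain' fun a b => (a, b) ∈ G.D
  right_chain : right.Chain' fun a b => (a, b) ∈ G.D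
  head_cond : if hasBidir then (left.head left_ne, right.head right_ne) ∈ G.B
              else left.head left_ne = right.head right_ne

namespace Trek

variable {G : MixedGraph V}

/-- The source of a trek. -/
def source (π : G.Trek) : V := π.left.getLast π.left_ne

/-- The target of a trek. -/
def target (π : G.Trek) : V := π.right.getLast π.right_ne

/-- The left-hand side `Left(π)` of a trek, as a set of nodes. -/
def leftSet (π : G.Trek) : Finset V := π.left.toFinset

/-- The right-hand side `Right(π)` of a trek, as a set of nodes. -/
def rightSet (π : G.Trek) : Finset V := π.right.toFinset

/-- A half-trek is a trek whose left-hand side consists of exactly one node. -/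
def IsHalfTrek (π : G.Trek) : Prop := π.leftSet.card = 1

/-- The number of directed edges traversed by the trek. -/
def nEdges (π : G.Trek) : ℕ := (π.left.length - 1) + (π.right.length - 1)

end Trek

/-- `htr v`: the set of nodes `w ∉ {v} ∪ sib(v)` reachable from `v` by a half-trek
containing at least one directed edge. -/
def htr (G : MixedGraph V) (v : V) : Set V :=
  {w | w ≠ v ∧ w ∉ G.sib v ∧
    ∃ π : G.Trek, π.source = v ∧ π.target = w ∧ π.IsHalfTrek ∧ 1 ≤ π.nEdges}

/-- `f` encodes a system of treks from `Y` to `P`: treks with pairwise distinct sources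
forming `Y` and pairwise distinct targets forming `P`. -/
def IsTrekSystem (G : MixedGraph V) (Y P : Finset V) (f : V → G.Trek) : Prop :=
  (∀ y ∈ Y, (f y).source = y) ∧
  (Y.image fun y => (f y).target) = P ∧
  ∀ y ∈ Y, ∀ y' ∈ Y, y ≠ y' → (f y).target ≠ (f y').target

/-- The treks `f y`, `y ∈ Y`, have no sided intersection. -/
def NoSidedIntersection (G : MixedGraph V) (Y : Finset V) (f : V → G.Trek) : Prop :=
  ∀ y ∈ Y, ∀ y' ∈ Y, y ≠ y' →
    Disjoint (f y).leftSet (f y').leftSet ∧ Disjoint (f y).rightSet (f y').rightSet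

/-- `Y` satisfies the half-trek criterion with respect to `v`. -/
def SatisfiesHTC (G : MixedGraph V) (v : V) (Y : Finset V) : Prop :=
  Y.card = (G.pa v).card ∧
  (∀ y ∈ Y, y ≠ v ∧ y ∉ G.sib v) ∧
  ∃ f : V → G.Trek, (∀ y ∈ Y, (f y).IsHalfTrek) ∧
    G.IsTrekSystem Y (G.pa v) f ∧ G.NoSidedIntersection Y f

/-- `Y` satisfies the weak half-trek criterion with respect to `v`. -/
def SatisfiesWeakHTC (G : MixedGraph V) (v : V) (Y : Finset V) : Prop :=
  Y.card = (G.pa v).card ∧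
  (∀ y ∈ Y, y ≠ v ∧ y ∉ G.sib v) ∧
  ∃ f : V → G.Trek, (∀ y ∈ Y, y ∈ G.htr v → (f y).IsHalfTrek) ∧
    G.IsTrekSystem Y (G.pa v) f ∧ G.NoSidedIntersection Y f

/-- `G` is HTC-identifiable. -/
def HTCIdentifiable (G : MixedGraph V) : Prop :=
  ∃ Y : V → Finset V,
    (∀ v, G.SatisfiesHTC v (Y v)) ∧
    ∃ r : V → V → Prop, IsStrictTotalOrder V r ∧
      ∀ v w, w ∈ Y v → w ∈ G.htr v → r w v

/-- `G` is HTC-infinite-to-one. -/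
def HTCInfiniteToOne (G : MixedGraph V) : Prop :=
  ∀ Y : V → Finset V,
    (∃ v, ¬ G.SatisfiesHTC v (Y v)) ∨ ∃ v w, v ∈ Y w ∧ w ∈ Y v

/-- `G` is acyclic: no directed cycle can be formed from the edges in `D`. -/
def Acyclic (G : MixedGraph V) : Prop :=
  ∀ v : V, ¬ Relation.TransGen (fun a b => (a, b) ∈ G.D) v v

/-- `G` is simple: at most one edge between any pair of nodes. -/
def Simple (G : MixedGraph V) : Prop :=
  (∀ e ∈ G.D, e ∉ G.B) ∧ ∀ v w : V, (v, w) ∈ G.D → (w, v) ∉ G.D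

/-- `ℝ^D_reg`: real matrices supported on `D` with `I - Λ` invertible. -/
def RDreg (G : MixedGraph V) : Set (Matrix V V ℝ) :=
  {Λ | (∀ v w, (v, w) ∉ G.D → Λ v w = 0) ∧ IsUnit (1 - Λ).det}

/-- `PD(B)`: positive definite symmetric matrices supported on the diagonal and `B`. -/
def PDB (G : MixedGraph V) : Set (Matrix V V ℝ) :=
  {Ω | Ω.PosDef ∧ ∀ v w, v ≠ w → (v, w) ∉ G.B → Ω v w = 0}

/-- The parameter space `Θ = ℝ^D_reg × PD(B)`. -/
def Theta (G : MixedGraph V) : Set (Matrix V V ℝ × Matrix V V ℝ) :=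
  {θ | θ.1 ∈ G.RDreg ∧ θ.2 ∈ G.PDB}

/-- The parametrization `φ(Λ, Ω) = (I-Λ)^{-T} Ω (I-Λ)^{-1}`. -/
noncomputable def phi {R : Type*} [CommRing R] (Λ Ω : Matrix V V R) : Matrix V V R :=
  ((1 - Λ)⁻¹)ᵀ * Ω * (1 - Λ)⁻¹

/-- Evaluation of a polynomial in the coordinates `λ_vw` (left summand) and `ω_vw`
(right summand) at a parameter point `θ = (Λ, Ω)`. -/
noncomputable def evalParam (θ : Matrix V V ℝ × Matrix V V ℝ)
    (p : MvPolynomial ((V × V) ⊕ (V × V)) ℝ) : ℝ :=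
  MvPolynomial.eval (Sum.elim (fun e => θ.1 e.1 e.2) (fun e => θ.2 e.1 e.2)) p

/-- `V₀` is a proper algebraic subset of `Θ`: the intersection with `Θ` of the zero set of a
polynomial in the coordinates that does not vanish identically on `Θ`. -/
def IsProperAlgebraic (G : MixedGraph V)
    (V₀ : Set (Matrix V V ℝ × Matrix V V ℝ)) : Prop :=
  ∃ p : MvPolynomial ((V × V) ⊕ (V × V)) ℝ,
    (∃ θ ∈ G.Theta, evalParam θ p ≠ 0) ∧
    V₀ = {θ ∈ G.Theta | evalParam θ p = 0}

/-- Evaluation of a polynomial in the entries of a covariance matrix. -/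
noncomputable def evalAtCov (S : Matrix V V ℝ) (p : MvPolynomial (V × V) ℝ) : ℝ :=
  MvPolynomial.eval (fun e => S e.1 e.2) p

/-- `G` is rationally identifiable: some rational map `ψ` (each coordinate a quotient of
polynomials in the entries of the covariance matrix) satisfies `ψ ∘ φ_G = id` off a proper
algebraic subset of `Θ`. -/
def RationallyIdentifiable (G : MixedGraph V) : Prop :=
  ∃ V₀, G.IsProperAlgebraic V₀ ∧
    ∃ p q : ((V × V) ⊕ (V × V)) → MvPolynomial (V × V) ℝ,
      ∀ θ ∈ G.Theta \ V₀,
        (∀ i, evalAtCov (phi θ.1 θ.2) (q i) ≠ 0) ∧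
        (∀ v w : V, θ.1 v w * evalAtCov (phi θ.1 θ.2) (q (Sum.inl (v, w)))
            = evalAtCov (phi θ.1 θ.2) (p (Sum.inl (v, w)))) ∧
        (∀ v w : V, θ.2 v w * evalAtCov (phi θ.1 θ.2) (q (Sum.inr (v, w)))
            = evalAtCov (phi θ.1 θ.2) (p (Sum.inr (v, w))))

/-- `G` is generically identifiable: `φ_G` is injective off a proper algebraic subset. -/
def GenericallyIdentifiable (G : MixedGraph V) : Prop :=
  ∃ V₀, G.IsProperAlgebraic V₀ ∧
    Set.InjOn (fun θ : Matrix V V ℝ × Matrix V V ℝ => phi θ.1 θ.2) (G.Theta \ V₀)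

/-- `φ_G` is generically infinite-to-one. -/
def GenInfiniteToOne (G : MixedGraph V) : Prop :=
  ∃ V₀, G.IsProperAlgebraic V₀ ∧
    ∀ θ ∈ G.Theta \ V₀,
      {θ' ∈ G.Theta | phi θ'.1 θ'.2 = phi θ.1 θ.2}.Infinite

end MixedGraph

namespace MixedGraph

variable {V : Type*} [Fintype V] [DecidableEq V] {G : MixedGraph V}

namespace Trek

lemma source_mem_leftSet (π : G.Trek) : π.source ∈ π.leftSet :=
  List.mem_toFinset.2 (List.getLast_mem _)

lemma head_mem_leftSet (π : G.Trek) : π.left.head π.left_ne ∈ π.leftSet :=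
  List.mem_toFinset.2 (List.head_mem _)

/-- Extend the right-hand side of a trek by a list of further nodes. -/
def concatRight (π : G.Trek) (l : List V)
    (hc : (π.right ++ l).Chain' fun a b => (a, b) ∈ G.D) : G.Trek where
  left := π.left
  right := π.right ++ l
  left_ne := π.left_ne
  right_ne := by simp [π.right_ne]
  hasBidir := π.hasBidir
  left_chain := π.left_chain
  right_chain := hc
  head_cond := by
    have h : (π.right ++ l).head (by simp [π.right_ne]) = π.right.head π.right_ne :=
      List.head_append_of_ne_nil π.right_ne
    have h0 := π.head_cond
    cases hB : π.hasBidir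
    · rw [hB] at h0; simpa [h] using h0
    · rw [hB] at h0; simpa [h] using h0

@[simp] lemma concatRight_source (π : G.Trek) (l : List V) (hc) :
    (π.concatRight l hc).source = π.source := rfl

@[simp] lemma concatRight_leftSet (π : G.Trek) (l : List V) (hc) :
    (π.concatRight l hc).leftSet = π.leftSet := rfl

lemma concatRight_target (π : G.Trek) (l : List V) (hc) (hl : l ≠ []) :
    (π.concatRight l hc).target = l.getLast hl :=
  List.getLast_append_of_ne_nil _ hl

lemma concatRight_isHalfTrek (π : G.Trek) (l : List V) (hc) (h : π.IsHalfTrek) :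
    (π.concatRight l hc).IsHalfTrek := h

lemma concatRight_nEdges (π : G.Trek) (l : List V) (hc) :
    (π.concatRight l hc).nEdges = π.nEdges + l.length := by
  have h1 : 1 ≤ π.right.length := List.length_pos_iff.2 π.right_ne
  simp only [Trek.nEdges, concatRight, List.length_append]
  omega

/-- Extend a trek by a single directed edge out of its target. -/
def extendOne (π : G.Trek) (w : V) (hw : (π.target, w) ∈ G.D) : G.Trek :=
  π.concatRight [w] (by
    show List.IsChain _ _; rw [List.isChain_append]
    refine ⟨π.right_chain, List.isChain_singleton w, ?_⟩
    intro x hx z hz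
    rw [List.getLast?_eq_getLast π.right_ne] at hx
    simp only [Option.mem_def, Option.some_inj] at hx
    simp only [List.head?_cons, Option.mem_def, Option.some_inj] at hz
    subst hx; subst hz
    exact hw)

@[simp] lemma extendOne_source (π : G.Trek) (w : V) (hw) :
    (π.extendOne w hw).source = π.source := rfl

@[simp] lemma extendOne_target (π : G.Trek) (w : V) (hw) :
    (π.extendOne w hw).target = w :=
  concatRight_target _ _ _ (by simp)

lemma extendOne_isHalfTrek (π : G.Trek) (w : V) (hw) (h : π.IsHalfTrek) :
    (π.extendOne w hw).IsHalfTrek := h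

lemma extendOne_nEdges (π : G.Trek) (w : V) (hw) :
    1 ≤ (π.extendOne w hw).nEdges := by
  rw [extendOne, concatRight_nEdges]; simp

/-- Replace the left-hand side of a trek by its head, producing a half-trek
with the same right side. -/
def toHalfLeft (π : G.Trek) : G.Trek where
  left := [π.left.head π.left_ne]
  right := π.right
  left_ne := by simp
  right_ne := π.right_ne
  hasBidir := π.hasBidir
  left_chain := List.isChain_singleton _
  right_chain := π.right_chain
  head_cond := by
    have h0 := π.head_cond
    cases hB : π.hasBidir
    · rw [hB] at h0; simpa using h0
    · rw [hB] at h0; simpa using h0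

@[simp] lemma toHalfLeft_source (π : G.Trek) :
    π.toHalfLeft.source = π.left.head π.left_ne := rfl

@[simp] lemma toHalfLeft_target (π : G.Trek) : π.toHalfLeft.target = π.target := rfl

@[simp] lemma toHalfLeft_rightSet (π : G.Trek) : π.toHalfLeft.rightSet = π.rightSet := rfl

lemma toHalfLeft_isHalfTrek (π : G.Trek) : π.toHalfLeft.IsHalfTrek := by
  simp [Trek.IsHalfTrek, Trek.leftSet, toHalfLeft]

lemma toHalfLeft_leftSet_subset (π : G.Trek) : π.toHalfLeft.leftSet ⊆ π.leftSet := by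
  intro x hx
  simp only [Trek.leftSet, toHalfLeft, List.toFinset_cons, List.toFinset_nil,
    insert_empty_eq, Finset.mem_singleton] at hx
  subst hx
  exact π.head_mem_leftSet

end Trek

lemma sib_symm {a b : V} (h : a ∈ G.sib b) : b ∈ G.sib a := by
  simp only [sib, Finset.mem_filter, Finset.mem_univ, true_and] at h ⊢
  exact G.B_symm _ _ h

/-- A trek from a non-half source is longer than one node on the left. -/
lemma Trek.two_le_left_length {π : G.Trek} (h : ¬ π.IsHalfTrek) : 2 ≤ π.left.length := by
  have h1 : 0 < π.leftSet.card := Finset.card_pos.2 ⟨_, π.source_mem_leftSet⟩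
  have h2 : π.leftSet.card ≤ π.left.length := List.toFinset_card_le _
  have h3 : π.leftSet.card ≠ 1 := h
  omega

lemma SatisfiesHTC.weak {v : V} {Y : Finset V} (h : G.SatisfiesHTC v Y) :
    G.SatisfiesWeakHTC v Y := by
  obtain ⟨h1, h2, f, hh, hs, hn⟩ := h
  exact ⟨h1, h2, f, fun y hy _ => hh y hy, hs, hn⟩

/-- If `u` is a member of a set satisfying the HTC with respect to `w`, then `w` is
half-trek reachable from `u`. -/
lemma htr_of_htc_mem {w : V} {Z : Finset V} (h : G.SatisfiesHTC w Z) {u : V} (hu : u ∈ Z) :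
    w ∈ G.htr u := by
  obtain ⟨hcard, hii, f, hhalf, ⟨hsrc, himg, -⟩, -⟩ := h
  obtain ⟨hune, husib⟩ := hii u hu
  have hp : (f u).target ∈ G.pa w := himg ▸ Finset.mem_image_of_mem _ hu
  have hD : ((f u).target, w) ∈ G.D := by
    simpa [pa] using hp
  refine ⟨hune.symm, fun hws => husib (sib_symm hws), (f u).extendOne w hD, ?_, ?_, ?_, ?_⟩
  · rw [Trek.extendOne_source]; exact hsrc u hu
  · exact Trek.extendOne_target _ _ _
  · exact Trek.extendOne_isHalfTrek _ _ _ (hhalf u hu)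
  · exact Trek.extendOne_nEdges _ _ _

/-- Core lemma: a weak-HTC set can be converted into a (strong) HTC set whose
half-trek-reachable members all come from the original set. -/
lemma weak_to_strong {v : V} {Y : Finset V} (h : G.SatisfiesWeakHTC v Y) :
    ∃ Y', G.SatisfiesHTC v Y' ∧ ∀ w ∈ Y', w ∈ G.htr v → w ∈ Y := by
  obtain ⟨h1, h2, f, hh, hs, hn⟩ := h
  suffices H : ∀ n (Y : Finset V) (f : V → G.Trek),
      Y.card = (G.pa v).card → (∀ y ∈ Y, y ≠ v ∧ y ∉ G.sib v) →
      (∀ y ∈ Y, y ∈ G.htr v → (f y).IsHalfTrek) →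
      G.IsTrekSystem Y (G.pa v) f → G.NoSidedIntersection Y f →
      (Y.filter fun z => ¬ (f z).IsHalfTrek).card ≤ n →
      ∃ Y', G.SatisfiesHTC v Y' ∧ ∀ w ∈ Y', w ∈ G.htr v → w ∈ Y by
    exact H _ Y f h1 h2 hh hs hn le_rfl
  clear h1 h2 hh hs hn f Y
  intro n
  induction n with
  | zero =>
    intro Y f h1 h2 hh hs hn hc
    have hemp : Y.filter (fun z => ¬ (f z).IsHalfTrek) = ∅ :=
      Finset.card_eq_zero.mp (Nat.le_zero.mp hc)
    have hall : ∀ z ∈ Y, (f z).IsHalfTrek := by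
      intro z hz
      exact not_not.mp (Finset.filter_eq_empty_iff.mp hemp hz)
    exact ⟨Y, ⟨h1, h2, f, hall, hs, hn⟩, fun w hw _ => hw⟩
  | succ n ih =>
    intro Y f h1 h2 hh hs hn hc
    by_cases hall : ∀ z ∈ Y, (f z).IsHalfTrek
    · exact ⟨Y, ⟨h1, h2, f, hall, hs, hn⟩, fun w hw _ => hw⟩
    push_neg at hall
    obtain ⟨y, hyY, hbad⟩ := hall
    obtain ⟨hyv, hysib⟩ := h2 y hyY
    have hyhtr : y ∉ G.htr v := fun hy => hbad (hh y hyY hy)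
    set π := f y with hπ
    set t := π.left.head π.left_ne with ht
    have hlen2 : 2 ≤ π.left.length := Trek.two_le_left_length hbad
    have hsrcy : π.source = y := hs.1 y hyY
    have htailne : π.left.tail ≠ [] := by
      have : π.left.tail.length = π.left.length - 1 := List.length_tail
      intro hnil
      rw [hnil] at this
      simp at this
      omega
    have hlcons : π.left = t :: π.left.tail := (List.cons_head_tail π.left_ne).symm
    have htailLast : π.left.tail.getLast htailne = y := by
      rw [List.getLast_tail]
      exact hsrcy
    -- t = v is impossible
    have htv : t ≠ v := by
      intro htv
      apply hyhtr
      refine ⟨hyv, hysib, ⟨[v], π.left, by simp, π.left_ne, false,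
        List.isChain_singleton _, π.left_chain, by simp [← htv, ht]⟩, ?_, ?_, ?_, ?_⟩
      · simp [Trek.source]
      · exact hsrcy
      · simp [Trek.IsHalfTrek, Trek.leftSet]
      · simp only [Trek.nEdges, List.length_singleton]
        omega
    -- t ∈ sib v is impossible
    have htsib : t ∉ G.sib v := by
      intro htsib
      have hB : (v, t) ∈ G.B := by
        simp only [sib, Finset.mem_filter, Finset.mem_univ, true_and] at htsib
        exact G.B_symm _ _ htsib
      apply hyhtr
      refine ⟨hyv, hysib, ⟨[v], π.left, by simp, π.left_ne, true,
        List.isChain_singleton _, π.left_chain, by simpa [ht] using hB⟩, ?_, ?_, ?_, ?_⟩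
      · simp [Trek.source]
      · exact hsrcy
      · simp [Trek.IsHalfTrek, Trek.leftSet]
      · simp only [Trek.nEdges, List.length_singleton]
        omega
    -- t ∈ htr v is impossible
    have hthtr : t ∉ G.htr v := by
      intro hth
      obtain ⟨-, -, π₀, hsrc0, htgt0, hhalf0, hedge0⟩ := hth
      have hlc : List.Chain' (fun a b => (a, b) ∈ G.D) (t :: π.left.tail) :=
        hlcons ▸ π.left_chain
      have hcc : (π₀.right ++ π.left.tail).Chain' fun a b => (a, b) ∈ G.D := by
        show List.IsChain _ _; rw [List.isChain_append]
        refine ⟨π₀.right_chain, π.left_chain.tail, ?_⟩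
        intro x hx z hz
        rw [List.getLast?_eq_getLast π₀.right_ne] at hx
        simp only [Option.mem_def, Option.some_inj] at hx
        subst hx
        have hxt : π₀.right.getLast π₀.right_ne = t := htgt0
        rw [hxt]
        exact (List.isChain_cons.mp hlc).1 z hz
      apply hyhtr
      refine ⟨hyv, hysib, π₀.concatRight π.left.tail hcc, ?_, ?_, ?_, ?_⟩
      · rw [Trek.concatRight_source]; exact hsrc0
      · rw [Trek.concatRight_target _ _ _ htailne]; exact htailLast
      · exact Trek.concatRight_isHalfTrek _ _ _ hhalf0
      · rw [Trek.concatRight_nEdges]; omega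
    -- t is distinct from every other source
    have htY : ∀ z ∈ Y, z ≠ y → t ≠ z := by
      intro z hz hzy htz
      have hdisj := (hn y hyY z hz (Ne.symm hzy)).1
      have ht1 : t ∈ π.leftSet := π.head_mem_leftSet
      have ht2 : t ∈ (f z).leftSet := by
        rw [htz]
        have h3 := (f z).source_mem_leftSet
        rwa [hs.1 z hz] at h3
      exact (Finset.disjoint_left.mp hdisj ht1) ht2
    have hteY : t ∉ Y.erase y := by
      intro hte
      exact htY t (Finset.mem_of_mem_erase hte) (Finset.ne_of_mem_erase hte) rfl
    set g := π.toHalfLeft with hg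
    set Y' := insert t (Y.erase y) with hY'
    set f' := Function.update f t g with hf'
    have hf'erase : ∀ z ∈ Y.erase y, f' z = f z := by
      intro z hz
      apply Function.update_of_ne
      intro hzt
      exact hteY (hzt ▸ hz)
    have hf't : f' t = g := Function.update_self _ _ _
    have hgsrc : g.source = t := Trek.toHalfLeft_source π
    have hgtgt : g.target = π.target := rfl
    -- apply the induction hypothesis
    have step := ih Y' f' ?_ ?_ ?_ ?_ ?_ ?_
    · obtain ⟨Y'', hY'', hsub⟩ := step
      refine ⟨Y'', hY'', fun w hw hwh => ?_⟩
      have hw' := hsub w hw hwh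
      rw [hY'] at hw'
      rcases Finset.mem_insert.mp hw' with hwt | hwe
      · exact absurd hwh (hwt ▸ hthtr)
      · exact Finset.mem_of_mem_erase hwe
    · -- cardinality
      rw [hY', Finset.card_insert_of_notMem hteY, Finset.card_erase_of_mem hyY]
      have : 1 ≤ Y.card := Finset.card_pos.2 ⟨y, hyY⟩
      omega
    · -- condition (ii)
      intro z hz
      rcases Finset.mem_insert.mp hz with hzt | hze
      · exact hzt ▸ ⟨htv, htsib⟩
      · exact h2 z (Finset.mem_of_mem_erase hze)
    · -- half-treks for htr members
      intro z hz hzh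
      rcases Finset.mem_insert.mp hz with hzt | hze
      · exact absurd hzh (hzt ▸ hthtr)
      · rw [hf'erase z hze]
        exact hh z (Finset.mem_of_mem_erase hze) hzh
    · -- trek system
      refine ⟨?_, ?_, ?_⟩
      · intro z hz
        rcases Finset.mem_insert.mp hz with hzt | hze
        · subst hzt; rw [hf't]; exact hgsrc
        · rw [hf'erase z hze]; exact hs.1 z (Finset.mem_of_mem_erase hze)
      · have himg : (Y'.image fun z => (f' z).target)
            = insert (f y).target ((Y.erase y).image fun z => (f z).target) := by
          rw [hY', Finset.image_insert, hf't]
          congr 1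
          exact Finset.image_congr fun z hz => by rw [hf'erase z hz]
        have himg2 : (Y.image fun z => (f z).target)
            = insert (f y).target ((Y.erase y).image fun z => (f z).target) := by
          conv_lhs => rw [← Finset.insert_erase hyY]
          exact Finset.image_insert _ _ _
        rw [himg, ← himg2]
        exact hs.2.1
      · intro z hz z' hz' hne
        rcases Finset.mem_insert.mp hz with hzt | hze <;>
          rcases Finset.mem_insert.mp hz' with hzt' | hze'
        · exact absurd (hzt.trans hzt'.symm) hne
        · subst hzt
          rw [hf't, hf'erase z' hze']
          exact hs.2.2 y hyY z' (Finset.mem_of_mem_erase hze')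
            (Ne.symm (Finset.ne_of_mem_erase hze'))
        · subst hzt'
          rw [hf't, hf'erase z hze]
          exact hs.2.2 z (Finset.mem_of_mem_erase hze) y hyY
            (Finset.ne_of_mem_erase hze)
        · rw [hf'erase z hze, hf'erase z' hze']
          exact hs.2.2 z (Finset.mem_of_mem_erase hze) z' (Finset.mem_of_mem_erase hze') hne
    · -- no sided intersection
      intro z hz z' hz' hne
      rcases Finset.mem_insert.mp hz with hzt | hze <;>
        rcases Finset.mem_insert.mp hz' with hzt' | hze'
      · exact absurd (hzt.trans hzt'.symm) hne
      · subst hzt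
        rw [hf't, hf'erase z' hze']
        have hold := hn y hyY z' (Finset.mem_of_mem_erase hze')
          (Ne.symm (Finset.ne_of_mem_erase hze'))
        exact ⟨Finset.disjoint_of_subset_left π.toHalfLeft_leftSet_subset hold.1,
          by rw [hg, Trek.toHalfLeft_rightSet]; exact hold.2⟩
      · subst hzt'
        rw [hf't, hf'erase z hze]
        have hold := hn z (Finset.mem_of_mem_erase hze) y hyY (Finset.ne_of_mem_erase hze)
        exact ⟨Finset.disjoint_of_subset_right π.toHalfLeft_leftSet_subset hold.1,
          by rw [hg, Trek.toHalfLeft_rightSet]; exact hold.2⟩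
      · rw [hf'erase z hze, hf'erase z' hze']
        exact hn z (Finset.mem_of_mem_erase hze) z' (Finset.mem_of_mem_erase hze') hne
    · -- the measure decreases
      have hsub : Y'.filter (fun z => ¬ (f' z).IsHalfTrek)
          ⊆ (Y.filter fun z => ¬ (f z).IsHalfTrek).erase y := by
        intro z hz
        obtain ⟨hz1, hz2⟩ := Finset.mem_filter.mp hz
        rcases Finset.mem_insert.mp hz1 with hzt | hze
        · exact absurd (by rw [hzt, hf't]; exact π.toHalfLeft_isHalfTrek) hz2
        · rw [hf'erase z hze] at hz2
          exact Finset.mem_erase.2 ⟨Finset.ne_of_mem_erase hze,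
            Finset.mem_filter.2 ⟨Finset.mem_of_mem_erase hze, hz2⟩⟩
      have hmem : y ∈ Y.filter fun z => ¬ (f z).IsHalfTrek := Finset.mem_filter.2 ⟨hyY, hbad⟩
      have h01 : 1 ≤ (Y.filter fun z => ¬ (f z).IsHalfTrek).card :=
        Finset.card_pos.2 ⟨y, hmem⟩
      have h02 := Finset.card_le_card hsub
      rw [Finset.card_erase_of_mem hmem] at h02
      omega

end MixedGraph

/-- **Weak HTC**: the weak half-trek criterion proves a graph rationally identifiable
(resp. generically infinite-to-one) if and only if the graph is HTC-identifiable
(resp. HTC-infinite-to-one). -/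
theorem weak_htc_equivalence {V : Type*} [Fintype V] [DecidableEq V] (G : MixedGraph V) :
    ((∃ Y : V → Finset V, (∀ v, G.SatisfiesWeakHTC v (Y v)) ∧
        ∃ r : V → V → Prop, IsStrictTotalOrder V r ∧
          ∀ v w, w ∈ Y v → w ∈ G.htr v → r w v) ↔
      G.HTCIdentifiable) ∧
    ((∀ Y : V → Finset V,
        (∃ v, ¬ G.SatisfiesWeakHTC v (Y v)) ∨ ∃ v w, v ∈ Y w ∧ w ∈ Y v) ↔
      G.HTCInfiniteToOne) := by
  constructor
  · constructor
    · rintro ⟨Y, hY, r, hr, hord⟩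
      choose Y' hY' hsub using fun v => MixedGraph.weak_to_strong (hY v)
      exact ⟨Y', hY', r, hr, fun v w hw hwh => hord v w (hsub v w hw hwh) hwh⟩
    · rintro ⟨Y, hY, r, hr, hord⟩
      exact ⟨Y, fun v => (hY v).weak, r, hr, hord⟩
  · constructor
    · intro h Y
      rcases h Y with ⟨v, hv⟩ | hp
      · exact Or.inl ⟨v, fun hstrong => hv hstrong.weak⟩
      · exact Or.inr hp
    · intro h Y
      by_cases hall : ∀ v, G.SatisfiesWeakHTC v (Y v)
      · right
        choose Y' hY' hsub using fun v => MixedGraph.weak_to_strong (hall v)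
        rcases h Y' with ⟨v, hv⟩ | ⟨v, w, hvw, hwv⟩
        · exact absurd (hY' v) hv
        · have h1 : w ∈ G.htr v := MixedGraph.htr_of_htc_mem (hY' w) hvw
          have h2 : v ∈ G.htr w := MixedGraph.htr_of_htc_mem (hY' v) hwv
          exact ⟨v, w, hsub w v hvw h2, hsub v w hwv h1⟩
      · push_neg at hall
        exact Or.inl hall
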